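/- For all i, j ∈ {1,2,3} and all m ∈ ℤ: (i) [α^j_m, x*_{i,n}] = δ_{ij} δ_{m,−n} (as a scalar multiple of the identity) for every n ∈ ℤ with n ≠ 0; and (ii) [α^j_m, P_i] = 0. -/
import Mathlib


open Finset

/-- Levi-Civita symbol on `{1,2,3}` (indexed by `Fin 3`). -/
def eps (i j k : Fin 3) : ℤ :=
  (((j : ℤ) - (i : ℤ)) * ((k : ℤ) - (i : ℤ)) * ((k : ℤ) - (j : ℤ))) / 2

variable {V : Type*} [AddCommGroup V] [Module ℂ V]

/-- `x^i_n`: equals the given `x^i_0` for `n = 0`, and `−(1/n) α^i_n` for `n ≠ 0`. -/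
noncomputable def xop (α : Fin 3 → ℤ → Module.End ℂ V) (x0 : Fin 3 → Module.End ℂ V)
    (i : Fin 3) (n : ℤ) : Module.End ℂ V :=
  if n = 0 then x0 i else (-(n : ℂ)⁻¹) • α i n

/-- `P_i = β_{i,0} + Σ_{j,k} ε_{ijk} x^j_0 W^k − ½ Σ_{j,k} ε_{ijk} Σ_{m∈ℤ} m x^j_{−m} x^k_m`,
defined pointwise on vectors (the inner sum has finitely many nonzero terms on each vector). -/
noncomputable def Pop (α β : Fin 3 → ℤ → Module.End ℂ V) (x0 : Fin 3 → Module.End ℂ V)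
    (i : Fin 3) : V → V := fun v =>
  β i 0 v + (∑ j : Fin 3, ∑ k : Fin 3, eps i j k • (x0 j) ((α k 0) v))
    - (2 : ℂ)⁻¹ • ∑ j : Fin 3, ∑ k : Fin 3, eps i j k •
        ∑ᶠ m : ℤ, (m : ℂ) • (xop α x0 j (-m)) ((xop α x0 k m) v)

/-- `x*_{i,n} = −(1/n)(β_{i,n} + Σ_{j,k} ε_{ijk} x^j_n W^k − ½ Σ_{j,k} ε_{ijk} Σ_m m x^j_{n−m} x^k_m)`
for `n ≠ 0`, defined pointwise on vectors. -/
noncomputable def xstarop (α β : Fin 3 → ℤ → Module.End ℂ V) (x0 : Fin 3 → Module.End ℂ V)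
    (i : Fin 3) (n : ℤ) : V → V := fun v =>
  (-(n : ℂ)⁻¹) • (β i n v + (∑ j : Fin 3, ∑ k : Fin 3, eps i j k • (xop α x0 j n) ((α k 0) v))
    - (2 : ℂ)⁻¹ • ∑ j : Fin 3, ∑ k : Fin 3, eps i j k •
        ∑ᶠ m : ℤ, (m : ℂ) • (xop α x0 j (n - m)) ((xop α x0 k m) v))

/-- (i) `[α^j_m, x*_{i,n}] = δ_{ij} δ_{m,−n}` (a scalar multiple of the identity) for
`n ≠ 0`; (ii) `[α^j_m, P_i] = 0` (as endomorphisms, checked pointwise). -/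
theorem alpha_xstar_P_commutators
    (α β : Fin 3 → ℤ → Module.End ℂ V) (x0 : Fin 3 → Module.End ℂ V)
    (R1 : ∀ (i j : Fin 3) (m n : ℤ), ⁅α i m, α j n⁆ = 0)
    (R2 : ∀ (i j : Fin 3) (m n : ℤ), ⁅β i m, α j n⁆
      = if i = j ∧ m + n = 0 then (m : ℂ) • (1 : Module.End ℂ V) else 0)
    (R3 : ∀ (i j : Fin 3) (m n : ℤ), ⁅β i m, β j n⁆ = ∑ k : Fin 3, eps i j k • α k (m + n))
    (R4 : ∀ v : V, ∃ N : ℤ, ∀ (i : Fin 3) (n : ℤ), N ≤ n → α i n v = 0 ∧ β i n v = 0)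
    (R5a : ∀ (i j : Fin 3) (n : ℤ), ⁅α j n, x0 i⁆ = 0)
    (R5b : ∀ i j : Fin 3, ⁅x0 i, x0 j⁆ = 0)
    (R6 : ∀ (i j : Fin 3) (n : ℤ), ⁅β j n, x0 i⁆
      = if i = j ∧ n = 0 then (1 : Module.End ℂ V) else 0)
    (i j : Fin 3) (m : ℤ) :
    (∀ (n : ℤ), n ≠ 0 → ∀ v : V,
      (α j m) (xstarop α β x0 i n v) - xstarop α β x0 i n ((α j m) v)
        = if i = j ∧ m + n = 0 then v else 0) ∧
    (∀ v : V, (α j m) (Pop α β x0 i v) - Pop α β x0 i ((α j m) v) = 0) := by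
  -- Basic commutation facts
  have key : ∀ {f g : Module.End ℂ V}, ⁅f, g⁆ = 0 → ∀ v : V, f (g v) = g (f v) := by
    intro f g h v
    have h2 : f * g = g * f := sub_eq_zero.mp (by rw [← Ring.lie_def]; exact h)
    calc f (g v) = (f * g) v := rfl
      _ = (g * f) v := by rw [h2]
      _ = g (f v) := rfl
  have hαα : ∀ (a : Fin 3) (p : ℤ) (v : V), α j m (α a p v) = α a p (α j m v) :=
    fun a p v => key (R1 j a m p) v
  have hαx0 : ∀ (a : Fin 3) (v : V), α j m (x0 a v) = x0 a (α j m v) :=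
    fun a v => key (R5a a j m) v
  have hαxop : ∀ (a : Fin 3) (p : ℤ) (v : V),
      α j m (xop α x0 a p v) = xop α x0 a p (α j m v) := by
    intro a p v
    unfold xop
    split
    · exact hαx0 a v
    · simp only [LinearMap.smul_apply, map_smul, hαα]
  -- commutator with β
  have hβ : ∀ (p : ℤ) (v : V), α j m (β i p v)
      = β i p (α j m v) - (if i = j ∧ p + m = 0 then (p : ℂ) • v else 0) := by
    intro p v
    have h2 : β i p * α j m - α j m * β i p
        = if i = j ∧ p + m = 0 then (p : ℂ) • (1 : Module.End ℂ V) else 0 := by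
      rw [← Ring.lie_def]; exact R2 i j p m
    have h3 := congrArg (fun f : Module.End ℂ V => f v) h2
    simp only [LinearMap.sub_apply, Module.End.mul_apply] at h3
    have h4 : ((if i = j ∧ p + m = 0 then (p : ℂ) • (1 : Module.End ℂ V) else 0) : Module.End ℂ V) v
        = if i = j ∧ p + m = 0 then (p : ℂ) • v else 0 := by
      split <;> simp
    rw [h4] at h3
    rw [← h3]; abel
  -- finiteness of supports
  have hsupp : ∀ (n : ℤ) (j0 k0 : Fin 3) (v : V),
      (Function.support fun m' : ℤ =>
        (m' : ℂ) • (xop α x0 j0 (n - m')) ((xop α x0 k0 m') v)).Finite := by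
    intro n j0 k0 v
    obtain ⟨N, hN⟩ := R4 v
    apply Set.Finite.subset (Set.finite_Ioo (n - max N 1) (max N 1))
    intro m' hm'
    simp only [Function.mem_support] at hm'
    simp only [Set.mem_Ioo]
    constructor
    · by_contra h
      push_neg at h
      apply hm'
      have h1 : max N 1 ≤ n - m' := by omega
      have hne : n - m' ≠ 0 := by omega
      have hz : α j0 (n - m') (xop α x0 k0 m' v) = 0 := by
        unfold xop
        split
        · rw [key (R5a k0 j0 (n - m')) v,
            (hN j0 (n - m') (le_trans (le_max_left N 1) h1)).1, map_zero]
        · rw [LinearMap.smul_apply, map_smul, key (R1 j0 k0 (n - m') m') v,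
            (hN j0 (n - m') (le_trans (le_max_left N 1) h1)).1, map_zero, smul_zero]
      have hx : xop α x0 j0 (n - m') = (-((n - m' : ℤ) : ℂ)⁻¹) • α j0 (n - m') := by
        unfold xop; rw [if_neg hne]
      rw [hx, LinearMap.smul_apply, hz, smul_zero, smul_zero]
    · by_contra h
      push_neg at h
      apply hm'
      have hne : m' ≠ 0 := by omega
      have : xop α x0 k0 m' v = 0 := by
        unfold xop
        rw [if_neg hne, LinearMap.smul_apply,
          (hN k0 m' (le_trans (le_max_left N 1) h)).1, smul_zero]
      rw [this, map_zero, smul_zero]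
  -- pushing α through the infinite sums
  have hfin : ∀ (n : ℤ) (j0 k0 : Fin 3) (v : V),
      α j m (∑ᶠ m' : ℤ, (m' : ℂ) • (xop α x0 j0 (n - m')) ((xop α x0 k0 m') v))
        = ∑ᶠ m' : ℤ, (m' : ℂ) • (xop α x0 j0 (n - m')) ((xop α x0 k0 m') (α j m v)) := by
    intro n j0 k0 v
    have hmap := (α j m).toAddMonoidHom.map_finsum (hsupp n j0 k0 v)
    simp only [LinearMap.toAddMonoidHom_coe] at hmap
    rw [hmap]
    exact finsum_congr fun m' => by
      simp only [LinearMap.toAddMonoidHom_coe, map_smul, hαxop]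
  constructor
  · -- part (i)
    intro n hn v
    have hkey : (α j m) (xstarop α β x0 i n v) - xstarop α β x0 i n ((α j m) v)
        = (-(n : ℂ)⁻¹) • (-(if i = j ∧ n + m = 0 then (n : ℂ) • v else 0)) := by
      simp only [xstarop, map_smul, map_sub, map_add, map_sum, map_zsmul, hβ, hαxop, hαα,
        hfin]
      rw [← smul_sub]; congr 1; abel
    rw [hkey]
    by_cases hc : i = j ∧ n + m = 0
    · have hc' : i = j ∧ m + n = 0 := ⟨hc.1, by omega⟩
      rw [if_pos hc, if_pos hc', neg_smul, smul_neg, neg_neg, smul_smul,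
        inv_mul_cancel₀ (Int.cast_ne_zero.mpr hn : (n : ℂ) ≠ 0), one_smul]
    · have hc' : ¬(i = j ∧ m + n = 0) := fun h => hc ⟨h.1, by omega⟩
      rw [if_neg hc, if_neg hc', neg_zero, smul_zero]
  · -- part (ii)
    intro v
    have hfin0 : ∀ (j0 k0 : Fin 3),
        α j m (∑ᶠ m' : ℤ, (m' : ℂ) • (xop α x0 j0 (-m')) ((xop α x0 k0 m') v))
          = ∑ᶠ m' : ℤ, (m' : ℂ) • (xop α x0 j0 (-m')) ((xop α x0 k0 m') (α j m v)) := by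
      intro j0 k0
      have := hfin 0 j0 k0 v
      simpa only [zero_sub] using this
    have hβ0 : α j m (β i 0 v) = β i 0 (α j m v) := by
      rw [hβ 0 v]
      simp
    simp only [Pop, map_sub, map_add, map_smul, map_sum, map_zsmul, hβ0, hαx0, hαα, hfin0]
    abel
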